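/- Let F be a 3-CNF formula with clauses indexed so that its literals form a family (X_i)_{i ∈ [m]}, where each X_i is either a variable or a negated variable, and the clauses are the triples (X_{3t-2}, X_{3t-1}, X_{3t}) for t ∈ [m/3]. Let P be the set of pairs {i,j} with i ≠ j and X_i = X_j (same literal), let J be a set of pairs {i,j} such that one of X_i, X_j is a variable and the other is its negation, with one such pair chosen for every variable that occurs both positively and negatively in F, and let K = {(3t-2, 3t-1, 3t) : t ∈ [m/3]}. Then F is satisfiable if and only if EQ(P) ∩ NEQ(J) ∩ OR(K) is nonempty, provided P additionally contains all pairs {i,j} with X_i = X_j and J is large enough to contain, for each variable occurring in both polarities, some pair witnessing the two polarities. More precisely: F is satisfiable iff there exists f : [m] → {0,1} such that f(i) = f(j) whenever X_i = X_j, f(i) ≠ f(j) whenever X_i = ¬X_j, and f(3t-2) ∨ f(3t-1) ∨ f(3t) = 1 for all t ∈ [m/3]. -/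

import Mathlib

/-- A 3-CNF formula, given by a family of clauses `X t` each consisting of
three literals `X t 0, X t 1, X t 2` (a literal being a variable paired with a polarity),
is satisfiable iff there is a truth allocation `f` on the literal positions that agrees
on equal literals, disagrees on complementary literals, and makes some literal of each
clause true. -/
theorem stmt5 {V : Type*} (n : ℕ) (X : Fin n → Fin 3 → V × Bool) :
    (∃ α : V → Bool, ∀ t : Fin n, ∃ s : Fin 3, α (X t s).1 = (X t s).2) ↔
      (∃ f : Fin n → Fin 3 → Bool,
        (∀ t s t' s', X t s = X t' s' → f t s = f t' s') ∧
        (∀ t s t' s', (X t s).1 = (X t' s').1 → (X t s).2 = !(X t' s').2 →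
          f t s ≠ f t' s') ∧
        (∀ t : Fin n, f t 0 = true ∨ f t 1 = true ∨ f t 2 = true)) := by
  classical
  constructor
  · rintro ⟨α, hα⟩
    refine ⟨fun t s => α (X t s).1 == (X t s).2, ?_, ?_, ?_⟩
    · intro t s t' s' h; simp only []; rw [h]
    · intro t s t' s' h1 h2
      simp only [beq_iff_eq]
      rw [h1, h2]
      cases α (X t' s').1 <;> cases (X t' s').2 <;> simp
    · intro t
      obtain ⟨s, hs⟩ := hα t
      fin_cases s
      · left; simpa using hs
      · right; left; simpa using hs
      · right; right; simpa using hs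
  · rintro ⟨f, hEQ, hNEQ, hOR⟩
    set α : V → Bool := fun v =>
      if h : ∃ p : Fin n × Fin 3, (X p.1 p.2).1 = v then
        (if (X h.choose.1 h.choose.2).2 then f h.choose.1 h.choose.2
          else !f h.choose.1 h.choose.2)
      else true with hαdef
    have key : ∀ t s, f t s = true → α (X t s).1 = (X t s).2 := by
      intro t s hf
      have hex : ∃ p : Fin n × Fin 3, (X p.1 p.2).1 = (X t s).1 := ⟨(t, s), rfl⟩
      have hch := hex.choose_spec
      set p := hex.choose
      simp only [hαdef, dif_pos hex]
      by_cases hb : (X p.1 p.2).2 = (X t s).2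
      · have : X p.1 p.2 = X t s := Prod.ext hch hb
        have := hEQ _ _ _ _ this
        rw [this, hf]
        cases h2 : (X t s).2 <;> simp_all [p]
      · have hb' : (X p.1 p.2).2 = !(X t s).2 := by
          cases h2 : (X t s).2 <;> simp_all
        have hne := hNEQ _ _ _ _ hch hb'
        have : f p.1 p.2 = false := by
          cases h : f p.1 p.2
          · rfl
          · exact absurd (h.trans hf.symm) hne
        rw [this]
        cases h2 : (X t s).2 <;> simp_all [p]
    refine ⟨α, fun t => ?_⟩
    rcases hOR t with h | h | h
    · exact ⟨0, key t 0 h⟩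
    · exact ⟨1, key t 1 h⟩
    · exact ⟨2, key t 2 h⟩
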